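/- The large-s asymptotics f₃(s) = 4(2s+1)(10s²+10s+1)/35 satisfies f₃(s) ~ (16/7)s³ as s → ∞, and moreover (16/7) = (2/189)·(√6)⁶, matching the coefficient of S³ in the small-S expansion of the scaling function F(S,√6) = 2·6^{3/2}e^{-2√6 S}(1+e^{-2√6 S})/(1-e^{-2√6 S})³. -/

import Mathlib

open Real Filter Asymptotics

/-- f₃(s) = 4(2s+1)(10s²+10s+1)/35 ~ (16/7)s³ as s → ∞, and
16/7 = (2/189)·(√6)⁶, the coefficient of S³ in the small-S expansion of F(S,√6). -/
theorem stmt_7 :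
    (fun s : ℝ => 4 * (2 * s + 1) * (10 * s ^ 2 + 10 * s + 1) / 35)
      ~[atTop] (fun s : ℝ => 16 / 7 * s ^ 3) ∧
    (16 / 7 : ℝ) = 2 / 189 * (Real.sqrt 6) ^ 6 := by
  constructor
  · have h2 : (fun s : ℝ => s ^ 2) =o[atTop] fun s : ℝ => s ^ 3 :=
      isLittleO_pow_pow_atTop_of_lt (by norm_num)
    have h1 : (fun s : ℝ => s ^ 1) =o[atTop] fun s : ℝ => s ^ 3 :=
      isLittleO_pow_pow_atTop_of_lt (by norm_num)
    have h0 : (fun s : ℝ => s ^ 0) =o[atTop] fun s : ℝ => s ^ 3 :=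
      isLittleO_pow_pow_atTop_of_lt (by norm_num)
    have hdiff : (fun s : ℝ =>
        (4 * (2 * s + 1) * (10 * s ^ 2 + 10 * s + 1) / 35) - 16 / 7 * s ^ 3)
        =o[atTop] fun s : ℝ => s ^ 3 := by
      have := ((h2.const_mul_left (24/7)).add (h1.const_mul_left (48/35))).add
        (h0.const_mul_left (4/35))
      refine this.congr_left fun s => by ring
    rw [IsEquivalent]
    have : (fun s : ℝ => s ^ 3) =O[atTop] fun s : ℝ => 16 / 7 * s ^ 3 := by
      exact isBigO_self_const_mul (c := 16/7) (by norm_num) _ atTop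
    exact hdiff.trans_isBigO this
  · have h6 : Real.sqrt 6 ^ 2 = 6 := Real.sq_sqrt (by norm_num)
    have : Real.sqrt 6 ^ 6 = (Real.sqrt 6 ^ 2) ^ 3 := by ring
    rw [this, h6]; norm_num
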